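/- Let A be a Γ-invariant central hyperplane arrangement defined over L. Then the permutation character χ_{A,q} is a quasi-polynomial in q with values in the ring of ℂ-valued class functions on Γ: there exist ñ ∈ ℤ_{>0} and polynomials f^{(1)}, …, f^{(ñ)} with class-function coefficients such that χ_{A,q} = f^{(r)}(q) whenever q ≡ r (mod ñ). Furthermore, χ_{A,q} has the gcd-property: gcd(ñ, r_1) = gcd(ñ, r_2) implies f^{(r_1)} = f^{(r_2)}. -/

import Mathlib

open Matrix



lemma card_mul_ker (d q : ℕ) (hq : 0 < q) :
    Nat.card {y : ZMod q // (d : ZMod q) * y = 0} = Nat.gcd d q := by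
  haveI : NeZero q := ⟨hq.ne'⟩
  set f : ZMod q →+ ZMod q := AddMonoidHom.mulLeft (d : ZMod q) with hf
  have hker : Nat.card {y : ZMod q // (d : ZMod q) * y = 0} = Nat.card f.ker := rfl
  have hrange : f.range = AddSubgroup.zmultiples (d : ZMod q) := by
    ext z
    constructor
    · rintro ⟨y, rfl⟩
      have : f y = y.val • (d : ZMod q) := by
        show (d : ZMod q) * y = _
        rw [nsmul_eq_mul]
        rw [ZMod.natCast_val, ZMod.cast_id, mul_comm]
      rw [this]
      exact AddSubgroup.nsmul_mem _ (AddSubgroup.mem_zmultiples _) _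
    · rintro ⟨k, rfl⟩
      exact ⟨(k : ZMod q), by simp [hf, AddMonoidHom.mulLeft, mul_comm, zsmul_eq_mul]⟩
  have hcard_range : Nat.card f.range = q / Nat.gcd q d := by
    rw [hrange, Nat.card_zmultiples, ZMod.addOrderOf_coe d hq.ne']
  have h1 : Nat.card (ZMod q) = Nat.card (ZMod q ⧸ f.ker) * Nat.card f.ker :=
    AddSubgroup.card_eq_card_quotient_mul_card_addSubgroup f.ker
  have h2 : Nat.card (ZMod q ⧸ f.ker) = Nat.card f.range :=
    Nat.card_congr (QuotientAddGroup.quotientKerEquivRange f).toEquiv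
  have hq' : Nat.card (ZMod q) = q := Nat.card_zmod q
  have hdvd : Nat.gcd q d ∣ q := Nat.gcd_dvd_left q d
  have hgpos : 0 < Nat.gcd q d := Nat.gcd_pos_of_pos_left d hq
  rw [hker]
  rw [h2, hcard_range, hq'] at h1
  have : q / Nat.gcd q d * Nat.card f.ker = q / Nat.gcd q d * Nat.gcd q d := by
    rw [← h1, Nat.div_mul_cancel hdvd]
  have hpos : 0 < q / Nat.gcd q d := Nat.div_pos (Nat.le_of_dvd hq hdvd) hgpos
  have := Nat.eq_of_mul_eq_mul_left hpos this
  rw [this, Nat.gcd_comm]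


lemma card_solutions {ℓ : ℕ} {m : Type*} [Fintype m] [DecidableEq m] (B : Matrix (Fin ℓ) m ℤ) :
    ∃ d : Fin ℓ → ℕ, ∀ q : ℕ, 0 < q →
      Nat.card {x : Fin ℓ → ZMod q // x ᵥ* B.map (Int.cast : ℤ → ZMod q) = 0}
        = ∏ k, Nat.gcd (d k) q := by
  classical
  set N : Submodule ℤ (Fin ℓ → ℤ) := LinearMap.range B.mulVecLin with hN
  obtain ⟨n₀, snf⟩ := N.smithNormalForm (Pi.basisFun ℤ (Fin ℓ))
  set d : Fin ℓ → ℕ := fun k =>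
    if h : ∃ i, snf.f i = k then (snf.a h.choose).natAbs else 0 with hd
  refine ⟨d, fun q hq => ?_⟩
  haveI : NeZero q := ⟨hq.ne'⟩
  -- key cast lemma
  have habs : ∀ (a : ℤ) (z : ZMod q), ((a.natAbs : ZMod q) * z = 0 ↔ a • z = 0) := by
    intro a z
    have h1 : (a.natAbs : ZMod q) * z = (a.natAbs : ℤ) • z := by
      rw [zsmul_eq_mul, Int.cast_natCast]
    rcases Int.natAbs_eq a with h | h
    · rw [h1, ← h]
    · rw [h1]
      constructor
      · intro hz
        rw [h, neg_smul, hz, neg_zero]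
      · intro hz
        rw [h] at hz
        rw [← neg_neg ((a.natAbs : ℤ) • z), ← neg_smul, hz, neg_zero]
  -- step 1
  have e1cond : ∀ x : Fin ℓ → ZMod q,
      (x ᵥ* B.map (Int.cast : ℤ → ZMod q) = 0) ↔
      (N ≤ LinearMap.ker ((Pi.basisFun ℤ (Fin ℓ)).constr ℕ x)) := by
    intro x
    set φ := (Pi.basisFun ℤ (Fin ℓ)).constr (M' := ZMod q) ℕ x with hφ
    have hφv : ∀ v : Fin ℓ → ℤ, φ v = ∑ k, v k • x k := by
      intro v
      rw [hφ, Module.Basis.constr_apply_fintype]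
      simp [Pi.basisFun_equivFun]
    constructor
    · intro hx v hv
      obtain ⟨w, rfl⟩ := hv
      have : B.mulVecLin w = ∑ j, w j • (fun k => B k j) := by
        ext k
        simp [Matrix.mulVecLin, Matrix.mulVec, dotProduct, mul_comm]
      rw [LinearMap.mem_ker, this, map_sum]
      refine Finset.sum_eq_zero fun j _ => ?_
      rw [_root_.map_smul]
      have : φ (fun k => B k j) = 0 := by
        rw [hφv]
        have := congrFun hx j
        simpa [Matrix.vecMul, dotProduct, mul_comm] using this
      rw [this, smul_zero]
    · intro h
      funext j
      have hmem : (fun k => B k j) ∈ N := ⟨Pi.single j 1, by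
        ext k
        simp [Matrix.mulVecLin, Matrix.mulVec, dotProduct, Pi.single_apply]⟩
      have := h hmem
      rw [LinearMap.mem_ker, hφv] at this
      simpa [Matrix.vecMul, dotProduct, mul_comm] using this
  -- step 2 condition
  have e2cond : ∀ y : Fin ℓ → ZMod q,
      (N ≤ LinearMap.ker (snf.bM.constr (M' := ZMod q) ℕ y)) ↔
      (∀ i, snf.a i • y (snf.f i) = 0) := by
    intro y
    set φ := snf.bM.constr (M' := ZMod q) ℕ y with hφ
    have hbN : ∀ i, φ ((snf.bN i : Fin ℓ → ℤ)) = snf.a i • y (snf.f i) := by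
      intro i
      rw [snf.snf i, _root_.map_smul, hφ, Module.Basis.constr_basis]
    constructor
    · intro h i
      rw [← hbN i]
      exact h (snf.bN i).2
    · intro h v hv
      have hrepr : (⟨v, hv⟩ : N) = ∑ i, snf.bN.repr ⟨v, hv⟩ i • snf.bN i :=
        (snf.bN.sum_repr ⟨v, hv⟩).symm
      have hv' : v = ∑ i, snf.bN.repr ⟨v, hv⟩ i • (snf.bN i : Fin ℓ → ℤ) := by
        have := congrArg (Submodule.subtype N) hrepr
        simp only [map_sum, _root_.map_smul, Submodule.subtype_apply] at this
        exact this
      rw [LinearMap.mem_ker, hv', map_sum]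
      refine Finset.sum_eq_zero fun i _ => ?_
      rw [_root_.map_smul, hbN i, h i, smul_zero]
  -- step 3 condition
  have e3cond : ∀ y : Fin ℓ → ZMod q,
      (∀ i, snf.a i • y (snf.f i) = 0) ↔ (∀ k, (d k : ZMod q) * y k = 0) := by
    intro y
    constructor
    · intro h k
      by_cases hk : ∃ i, snf.f i = k
      · have hdk : d k = (snf.a hk.choose).natAbs := by rw [hd]; simp [dif_pos hk]
        rw [hdk, habs]
        have := h hk.choose
        rwa [hk.choose_spec] at this
      · have hdk : d k = 0 := by rw [hd]; simp [dif_neg hk]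
        rw [hdk]
        simp
    · intro h i
      have hk : ∃ i', snf.f i' = snf.f i := ⟨i, rfl⟩
      have hch : hk.choose = i := snf.f.injective hk.choose_spec
      have := h (snf.f i)
      have hdk : d (snf.f i) = (snf.a i).natAbs := by
        rw [hd]; simp only [dif_pos hk]; rw [hch]
      rw [hdk, habs] at this
      exact this
  -- assemble the equivalence
  have E1 : {x : Fin ℓ → ZMod q // x ᵥ* B.map (Int.cast : ℤ → ZMod q) = 0}
      ≃ {φ : (Fin ℓ → ℤ) →ₗ[ℤ] ZMod q // N ≤ LinearMap.ker φ} :=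
    ((Pi.basisFun ℤ (Fin ℓ)).constr (M' := ZMod q) ℕ).toEquiv.subtypeEquiv e1cond
  have E2 : {φ : (Fin ℓ → ℤ) →ₗ[ℤ] ZMod q // N ≤ LinearMap.ker φ}
      ≃ {y : Fin ℓ → ZMod q // ∀ i, snf.a i • y (snf.f i) = 0} :=
    ((snf.bM.constr (M' := ZMod q) ℕ).toEquiv.symm.subtypeEquiv (by
      intro φ
      rw [← e2cond]
      have : (snf.bM.constr (M' := ZMod q) ℕ) ((snf.bM.constr (M' := ZMod q) ℕ).toEquiv.symm φ) = φ :=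
        (snf.bM.constr (M' := ZMod q) ℕ).apply_symm_apply φ
      rw [this]))
  have E3 : {y : Fin ℓ → ZMod q // ∀ i, snf.a i • y (snf.f i) = 0}
      ≃ (∀ k : Fin ℓ, {z : ZMod q // (d k : ZMod q) * z = 0}) :=
    (Equiv.subtypeEquivRight e3cond).trans
      (Equiv.subtypePiEquivPi (p := fun k z => (d k : ZMod q) * z = 0))
  have equiv1 := (E1.trans E2).trans E3
  rw [Nat.card_congr equiv1, Nat.card_pi]
  exact Finset.prod_congr rfl fun k _ => card_mul_ker (d k) q hq


lemma IE_count {α : Type*} [Fintype α] {n : ℕ} (P : α → Prop) [DecidablePred P]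
    (g : Fin n → α → Prop) [∀ i x, Decidable (g i x)] :
    (Nat.card {x : α // P x ∧ ∀ i, ¬ g i x} : ℤ) =
      ∑ S ∈ (Finset.univ : Finset (Fin n)).powerset,
        (-1) ^ S.card * (Nat.card {x : α // P x ∧ ∀ i ∈ S, g i x} : ℤ) := by
  classical
  have hcard : ∀ (p : α → Prop) [DecidablePred p],
      (Nat.card {x : α // p x} : ℤ) = ∑ x ∈ Finset.univ.filter p, (1 : ℤ) := by
    intro p hp
    rw [Nat.card_eq_fintype_card, Fintype.card_subtype]
    simp
  set Z : α → Finset (Fin n) := fun x => Finset.univ.filter (fun i => g i x) with hZ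
  calc (Nat.card {x : α // P x ∧ ∀ i, ¬ g i x} : ℤ)
      = ∑ x ∈ Finset.univ.filter P, (if Z x = ∅ then (1 : ℤ) else 0) := by
        rw [hcard]
        rw [Finset.sum_filter, Finset.sum_filter]
        refine Finset.sum_congr rfl fun x _ => ?_
        by_cases hP : P x
        · simp only [hP, true_and, if_true]
          by_cases hall : ∀ i, ¬ g i x
          · rw [if_pos hall, if_pos]
            rw [hZ]
            ext i
            simp [hall i]
          · rw [if_neg hall, if_neg]
            intro hempty
            apply hall
            intro i hgi
            have : i ∈ Z x := by simp [hZ, hgi]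
            rw [hempty] at this
            exact absurd this (Finset.notMem_empty i)
        · simp [hP]
    _ = ∑ x ∈ Finset.univ.filter P, ∑ S ∈ (Z x).powerset, (-1 : ℤ) ^ S.card := by
        refine Finset.sum_congr rfl fun x _ => ?_
        rw [Finset.sum_powerset_neg_one_pow_card]
    _ = ∑ x ∈ Finset.univ.filter P, ∑ S ∈ (Finset.univ : Finset (Fin n)).powerset,
          (if S ⊆ Z x then (-1 : ℤ) ^ S.card else 0) := by
        refine Finset.sum_congr rfl fun x _ => ?_
        rw [← Finset.sum_filter]
        congr 1
        ext S
        simp [Finset.mem_powerset, Finset.mem_filter]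
    _ = ∑ S ∈ (Finset.univ : Finset (Fin n)).powerset,
          (-1) ^ S.card * (Nat.card {x : α // P x ∧ ∀ i ∈ S, g i x} : ℤ) := by
        rw [Finset.sum_comm]
        refine Finset.sum_congr rfl fun S _ => ?_
        rw [hcard, Finset.mul_sum]
        rw [Finset.sum_filter, Finset.sum_filter]
        refine Finset.sum_congr rfl fun x _ => ?_
        have : S ⊆ Z x ↔ ∀ i ∈ S, g i x := by
          constructor
          · intro h i hi
            have := h hi
            rw [hZ] at this
            simpa using this
          · intro h i hi
            simp only [hZ, Finset.mem_filter, Finset.mem_univ, true_and]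
            exact h i hi
        by_cases hP : P x
        · by_cases hS : S ⊆ Z x
          · rw [if_pos hP, if_pos hS, if_pos ⟨hP, this.mp hS⟩, mul_one]
          · rw [if_pos hP, if_neg hS, if_neg (fun hc => hS (this.mpr hc.2))]
        · rw [if_neg hP, if_neg (fun hc => hP hc.1)]

/-- Let `A` be a `Γ`-invariant central hyperplane arrangement over `L = ℤ^ℓ`
(given by the coordinate vectors `α i` of the defining linear forms, with `Γ` acting through an
injective `ρ : Γ →* GL(L)` on row vectors, and the dual action permuting `{±α 1,…,±α n}`).
Let `χ q : Γ → ℂ` be the permutation character of `Γ` on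
`M(A;q) = {x̄ ∈ (ZMod q)^ℓ | x̄ ⬝ᵥ α i ≠ 0 ∀ i}`, i.e. `χ q γ` is the number of points of
`M(A;q)` fixed by `ρ_q(γ)`.  Then `χ` is a quasi-polynomial in `q` with values in the ring of
`ℂ`-valued class functions on `Γ`: there are `N > 0` and polynomials `C r` over `Γ → ℂ` whose
coefficients are class functions, with `χ q = (C (q mod N)).eval q` for all `q > 0`; moreover
`χ` has the gcd-property: `gcd N r₁ = gcd N r₂ → C r₁ = C r₂`. -/
theorem stmt_2 {ℓ n : ℕ} {Γ : Type*} [Group Γ] [Fintype Γ]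
    (ρ : Γ →* Matrix.GeneralLinearGroup (Fin ℓ) ℤ)
    (hρ : Function.Injective ρ)
    (α : Fin n → Fin ℓ → ℤ)
    (hinv : ∀ (γ : Γ) (i : Fin n), ∃ j : Fin n,
      ((↑(ρ γ)⁻¹ : Matrix (Fin ℓ) (Fin ℓ) ℤ) *ᵥ α i = α j) ∨
      ((↑(ρ γ)⁻¹ : Matrix (Fin ℓ) (Fin ℓ) ℤ) *ᵥ α i = -α j))
    (χ : ℕ → Γ → ℂ)
    (hχ : ∀ q : ℕ, 0 < q → ∀ γ : Γ, χ q γ =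
      Nat.card {x : Fin ℓ → ZMod q //
        (∀ i : Fin n, x ⬝ᵥ (fun j => ((α i j : ℤ) : ZMod q)) ≠ 0) ∧
        x ᵥ* (((ρ γ : Matrix (Fin ℓ) (Fin ℓ) ℤ)).map (Int.cast : ℤ → ZMod q)) = x}) :
    ∃ N : ℕ, 0 < N ∧ ∃ C : ZMod N → Polynomial (Γ → ℂ),
      (∀ q : ℕ, 0 < q → χ q = (C (q : ZMod N)).eval ((q : ℕ) : Γ → ℂ)) ∧
      (∀ (r : ZMod N) (m : ℕ) (γ σ : Γ), ((C r).coeff m) (σ * γ * σ⁻¹) = ((C r).coeff m) γ) ∧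
      (∀ r₁ r₂ : ZMod N, Nat.gcd N r₁.val = Nat.gcd N r₂.val → C r₁ = C r₂) := by
  classical
  -- the matrices whose kernels we count
  set B : Γ → Finset (Fin n) → Matrix (Fin ℓ) (Fin ℓ ⊕ Fin n) ℤ := fun γ S =>
    Matrix.of fun k j => Sum.elim
      (fun j' => (ρ γ : Matrix (Fin ℓ) (Fin ℓ) ℤ) k j' - (1 : Matrix (Fin ℓ) (Fin ℓ) ℤ) k j')
      (fun i => if i ∈ S then α i k else 0) j with hB
  choose d hd using fun γ S => card_solutions (B γ S)
  -- the modulus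
  set N : ℕ := ∏ γ : Γ, ∏ S ∈ (Finset.univ : Finset (Fin n)).powerset, ∏ k : Fin ℓ,
      (if d γ S k = 0 then 1 else d γ S k) with hN
  have hNpos : 0 < N := by
    refine Finset.prod_pos fun γ _ => Finset.prod_pos fun S _ => Finset.prod_pos fun k _ => ?_
    by_cases h : d γ S k = 0 <;> simp [h] <;> omega
  haveI : NeZero N := ⟨hNpos.ne'⟩
  have hdvd : ∀ (γ : Γ) (S : Finset (Fin n)), S ∈ (Finset.univ : Finset (Fin n)).powerset →
      ∀ k : Fin ℓ, d γ S k ≠ 0 → d γ S k ∣ N := by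
    intro γ S hS k hk
    have h1 : d γ S k ∣ ∏ k : Fin ℓ, (if d γ S k = 0 then 1 else d γ S k) := by
      have := Finset.dvd_prod_of_mem (fun k => if d γ S k = 0 then 1 else d γ S k)
        (Finset.mem_univ k)
      simpa [hk] using this
    refine h1.trans ?_
    have h2 := Finset.dvd_prod_of_mem
      (fun S => ∏ k : Fin ℓ, (if d γ S k = 0 then 1 else d γ S k)) hS
    refine h2.trans ?_
    exact Finset.dvd_prod_of_mem _ (Finset.mem_univ γ)
  -- gcd arithmetic
  have hgcdkey : ∀ e q : ℕ, e ∣ N → Nat.gcd e (Nat.gcd N (((q : ZMod N)).val)) = Nat.gcd e q := by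
    intro e q he
    have h1 : ((q : ZMod N)).val = q % N := ZMod.val_natCast N q
    have h2 : Nat.gcd N (q % N) = Nat.gcd N q := by
      rw [Nat.gcd_comm N (q % N)]
      exact (Nat.gcd_rec N q).symm
    rw [h1, h2, ← Nat.gcd_assoc, Nat.gcd_eq_left he]
  -- the key counting identity
  have hkey : ∀ q : ℕ, 0 < q → ∀ γ : Γ, χ q γ =
      ∑ S ∈ (Finset.univ : Finset (Fin n)).powerset,
        (-1 : ℂ) ^ S.card * ∏ k : Fin ℓ, (Nat.gcd (d γ S k) q : ℂ) := by
    intro q hq γ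
    haveI : NeZero q := ⟨hq.ne'⟩
    rw [hχ q hq γ]
    -- condition translation for the matrices B γ S
    have hBcond : ∀ (S : Finset (Fin n)) (x : Fin ℓ → ZMod q),
        ((x ᵥ* (((ρ γ : Matrix (Fin ℓ) (Fin ℓ) ℤ)).map (Int.cast : ℤ → ZMod q)) = x) ∧
          ∀ i ∈ S, x ⬝ᵥ (fun j => ((α i j : ℤ) : ZMod q)) = 0) ↔
        x ᵥ* ((B γ S).map (Int.cast : ℤ → ZMod q)) = 0 := by
      intro S x
      have hl : ∀ j' : Fin ℓ, (x ᵥ* ((B γ S).map (Int.cast : ℤ → ZMod q))) (Sum.inl j')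
          = (x ᵥ* (((ρ γ : Matrix (Fin ℓ) (Fin ℓ) ℤ)).map (Int.cast : ℤ → ZMod q))) j' - x j' := by
        intro j'
        simp only [Matrix.vecMul, dotProduct, Matrix.map_apply, hB, Matrix.of_apply,
          Sum.elim_inl, Int.cast_sub, mul_sub, Finset.sum_sub_distrib]
        congr 1
        rw [Finset.sum_congr rfl (fun k _ => ?_), Finset.sum_ite_eq' Finset.univ j' x]
        · rw [if_pos (Finset.mem_univ j')]
        · show x k * ((((1 : Matrix (Fin ℓ) (Fin ℓ) ℤ) k j' : ℤ) : ZMod q)) = _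
          rw [Matrix.one_apply]
          by_cases h : k = j' <;> simp [h]
      have hr : ∀ i : Fin n, (x ᵥ* ((B γ S).map (Int.cast : ℤ → ZMod q))) (Sum.inr i)
          = if i ∈ S then x ⬝ᵥ (fun j => ((α i j : ℤ) : ZMod q)) else 0 := by
        intro i
        by_cases hi : i ∈ S <;>
          simp [Matrix.vecMul, dotProduct, hB, hi]
      rw [funext_iff (g := (0 : Fin ℓ ⊕ Fin n → ZMod q)), Sum.forall]
      constructor
      · rintro ⟨h1, h2⟩
        constructor
        · intro j'
          rw [Pi.zero_apply, hl j', congrFun h1 j', sub_self]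
        · intro i
          rw [Pi.zero_apply, hr i]
          by_cases hi : i ∈ S
          · rw [if_pos hi]
            exact h2 i hi
          · rw [if_neg hi]
      · rintro ⟨h1, h2⟩
        constructor
        · funext j'
          have := h1 j'
          rw [Pi.zero_apply, hl j', sub_eq_zero] at this
          exact this
        · intro i hi
          have := h2 i
          rw [Pi.zero_apply, hr i, if_pos hi] at this
          exact this
    -- reorder the two conditions
    have h1 : Nat.card {x : Fin ℓ → ZMod q //
          (∀ i : Fin n, x ⬝ᵥ (fun j => ((α i j : ℤ) : ZMod q)) ≠ 0) ∧
          x ᵥ* (((ρ γ : Matrix (Fin ℓ) (Fin ℓ) ℤ)).map (Int.cast : ℤ → ZMod q)) = x}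
        = Nat.card {x : Fin ℓ → ZMod q //
          (x ᵥ* (((ρ γ : Matrix (Fin ℓ) (Fin ℓ) ℤ)).map (Int.cast : ℤ → ZMod q)) = x) ∧
          ∀ i : Fin n, ¬ (x ⬝ᵥ (fun j => ((α i j : ℤ) : ZMod q)) = 0)} :=
      Nat.card_congr (Equiv.subtypeEquivRight fun x => and_comm)
    have h2 := IE_count (α := Fin ℓ → ZMod q)
      (fun x => x ᵥ* (((ρ γ : Matrix (Fin ℓ) (Fin ℓ) ℤ)).map (Int.cast : ℤ → ZMod q)) = x)
      (fun i x => x ⬝ᵥ (fun j => ((α i j : ℤ) : ZMod q)) = 0)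
    have h3 : ∀ S : Finset (Fin n), Nat.card {x : Fin ℓ → ZMod q //
          (x ᵥ* (((ρ γ : Matrix (Fin ℓ) (Fin ℓ) ℤ)).map (Int.cast : ℤ → ZMod q)) = x) ∧
          ∀ i ∈ S, x ⬝ᵥ (fun j => ((α i j : ℤ) : ZMod q)) = 0}
        = ∏ k : Fin ℓ, Nat.gcd (d γ S k) q := by
      intro S
      rw [← hd γ S q hq]
      exact Nat.card_congr (Equiv.subtypeEquivRight (hBcond S))
    rw [h1]
    calc (Nat.card _ : ℂ)
        = (((Nat.card {x : Fin ℓ → ZMod q //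
          (x ᵥ* (((ρ γ : Matrix (Fin ℓ) (Fin ℓ) ℤ)).map (Int.cast : ℤ → ZMod q)) = x) ∧
          ∀ i : Fin n, ¬ (x ⬝ᵥ (fun j => ((α i j : ℤ) : ZMod q)) = 0)} : ℕ) : ℤ) : ℂ) := by
          push_cast
          rfl
      _ = ((∑ S ∈ (Finset.univ : Finset (Fin n)).powerset,
            (-1 : ℤ) ^ S.card * (Nat.card {x : Fin ℓ → ZMod q //
              (x ᵥ* (((ρ γ : Matrix (Fin ℓ) (Fin ℓ) ℤ)).map (Int.cast : ℤ → ZMod q)) = x) ∧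
              ∀ i ∈ S, x ⬝ᵥ (fun j => ((α i j : ℤ) : ZMod q)) = 0} : ℤ) : ℤ) : ℂ) := by
          rw [h2]
      _ = ∑ S ∈ (Finset.univ : Finset (Fin n)).powerset,
            (-1 : ℂ) ^ S.card * ∏ k : Fin ℓ, (Nat.gcd (d γ S k) q : ℂ) := by
          push_cast
          refine Finset.sum_congr rfl fun S _ => ?_
          rw [h3 S]
          push_cast
          ring
  -- χ is a class function
  have hconj : ∀ q : ℕ, 0 < q → ∀ γ σ : Γ, χ q (σ * γ * σ⁻¹) = χ q γ := by
    intro q hq γ σ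
    haveI : NeZero q := ⟨hq.ne'⟩
    rw [hχ q hq γ, hχ q hq (σ * γ * σ⁻¹)]
    congr 1
    apply Nat.card_congr
    set R : Γ → Matrix (Fin ℓ) (Fin ℓ) (ZMod q) := fun δ =>
      ((ρ δ : Matrix (Fin ℓ) (Fin ℓ) ℤ)).map (Int.cast : ℤ → ZMod q) with hR
    have hRmul : ∀ δ₁ δ₂ : Γ, R (δ₁ * δ₂) = R δ₁ * R δ₂ := by
      intro δ₁ δ₂
      rw [hR]
      simp only
      rw [map_mul ρ, Units.val_mul]
      exact Matrix.map_mul (f := Int.castRingHom (ZMod q))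
    have hRone : R 1 = 1 := by
      rw [hR]
      simp only [map_one ρ, Units.val_one]
      exact Matrix.map_one _ Int.cast_zero Int.cast_one
    have hcancel : ∀ (δ : Γ) (x : Fin ℓ → ZMod q), (x ᵥ* R δ) ᵥ* R δ⁻¹ = x := by
      intro δ x
      rw [Matrix.vecMul_vecMul, ← hRmul, mul_inv_cancel, hRone, Matrix.vecMul_one]
    -- the α-cast vectors
    have hαcast : ∀ (τ : Γ) (i : Fin n), ∃ j : Fin n,
        (R τ *ᵥ (fun j' => ((α i j' : ℤ) : ZMod q))) = (fun j' => ((α j j' : ℤ) : ZMod q)) ∨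
        (R τ *ᵥ (fun j' => ((α i j' : ℤ) : ZMod q))) = -(fun j' => ((α j j' : ℤ) : ZMod q)) := by
      intro τ i
      obtain ⟨j, hj⟩ := hinv τ⁻¹ i
      rw [map_inv, inv_inv] at hj
      refine ⟨j, ?_⟩
      have hcast : ∀ w : Fin ℓ → ℤ, R τ *ᵥ (fun j' => ((w j' : ℤ) : ZMod q))
          = fun k => (((((ρ τ : Matrix (Fin ℓ) (Fin ℓ) ℤ)) *ᵥ w) k : ℤ) : ZMod q) := by
        intro w
        funext k
        rw [hR]
        exact (RingHom.map_mulVec (Int.castRingHom (ZMod q)) _ w k).symm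
      rcases hj with hj | hj
      · left
        rw [hcast (α i), hj]
      · right
        rw [hcast (α i), hj]
        funext k
        simp
    have hstep : ∀ (δ τ : Γ) (x : Fin ℓ → ZMod q),
        ((∀ i : Fin n, x ⬝ᵥ (fun j' => ((α i j' : ℤ) : ZMod q)) ≠ 0) ∧ x ᵥ* R δ = x) →
        ((∀ i : Fin n, (x ᵥ* R τ) ⬝ᵥ (fun j' => ((α i j' : ℤ) : ZMod q)) ≠ 0) ∧
          (x ᵥ* R τ) ᵥ* R (τ⁻¹ * δ * τ) = x ᵥ* R τ) := by
      intro δ τ x ⟨hx1, hx2⟩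
      constructor
      · intro i
        rw [← Matrix.dotProduct_mulVec]
        obtain ⟨j, hj | hj⟩ := hαcast τ i
        · rw [hj]
          exact hx1 j
        · rw [hj, dotProduct_neg]
          exact neg_ne_zero.mpr (hx1 j)
      · rw [Matrix.vecMul_vecMul, ← hRmul]
        have : τ * (τ⁻¹ * δ * τ) = δ * τ := by group
        rw [this, hRmul, ← Matrix.vecMul_vecMul, hx2]
    refine Equiv.mk
      (fun x => ⟨x.1 ᵥ* R σ, by
        have h := hstep (σ * γ * σ⁻¹) σ x.1 x.2
        rwa [show σ⁻¹ * (σ * γ * σ⁻¹) * σ = γ by group] at h⟩)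
      (fun y => ⟨y.1 ᵥ* R σ⁻¹, by
        have h := hstep γ σ⁻¹ y.1 y.2
        rwa [show σ⁻¹⁻¹ * γ * σ⁻¹ = σ * γ * σ⁻¹ by group] at h⟩)
      ?_ ?_
    · intro x
      apply Subtype.ext
      exact hcancel σ x.1
    · intro y
      apply Subtype.ext
      show (y.1 ᵥ* R σ⁻¹) ᵥ* R σ = y.1
      have h := hcancel σ⁻¹ y.1
      rwa [inv_inv] at h
  -- the polynomials
  set P : Γ → ZMod N → Polynomial ℂ := fun γ r =>
    ∑ S ∈ (Finset.univ : Finset (Fin n)).powerset,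
      Polynomial.C ((-1 : ℂ) ^ S.card) * ∏ k : Fin ℓ,
        (if d γ S k = 0 then Polynomial.X else
          Polynomial.C ((Nat.gcd (d γ S k) (Nat.gcd N r.val) : ℂ))) with hP
  have hPdeg : ∀ γ r, (P γ r).natDegree ≤ ℓ := by
    intro γ r
    rw [hP]
    simp only
    refine Polynomial.natDegree_sum_le_of_forall_le _ _ fun S _ => ?_
    refine (Polynomial.natDegree_C_mul_le _ _).trans ?_
    refine (Polynomial.natDegree_prod_le _ _).trans ?_
    have hb : ∀ k : Fin ℓ, (if d γ S k = 0 then (Polynomial.X : Polynomial ℂ) else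
        Polynomial.C ((Nat.gcd (d γ S k) (Nat.gcd N r.val) : ℂ))).natDegree ≤ 1 := by
      intro k
      by_cases h : d γ S k = 0
      · simp [h]
      · simp [h]
    calc ∑ k : Fin ℓ, (if d γ S k = 0 then (Polynomial.X : Polynomial ℂ) else
          Polynomial.C ((Nat.gcd (d γ S k) (Nat.gcd N r.val) : ℂ))).natDegree
        ≤ ∑ _k : Fin ℓ, 1 := Finset.sum_le_sum fun k _ => hb k
      _ = ℓ := by simp
  have hPeval : ∀ q : ℕ, 0 < q → ∀ γ : Γ, (P γ ((q : ℕ) : ZMod N)).eval ((q : ℕ) : ℂ) = χ q γ := by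
    intro q hq γ
    rw [hP, hkey q hq γ]
    simp only [Polynomial.eval_finset_sum]
    refine Finset.sum_congr rfl fun S hS => ?_
    rw [Polynomial.eval_mul, Polynomial.eval_C, Polynomial.eval_prod]
    congr 1
    refine Finset.prod_congr rfl fun k _ => ?_
    by_cases h : d γ S k = 0
    · rw [if_pos h, Polynomial.eval_X, h, Nat.gcd_zero_left]
    · rw [if_neg h, Polynomial.eval_C]
      exact_mod_cast congrArg (fun t : ℕ => (t : ℂ)) (hgcdkey (d γ S k) q (hdvd γ S hS k h))
  set C : ZMod N → Polynomial (Γ → ℂ) := fun r =>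
    ∑ m ∈ Finset.range (ℓ + 1), Polynomial.C (fun γ => (P γ r).coeff m) * Polynomial.X ^ m
    with hC
  have hCcoeff : ∀ r m (γ : Γ), ((C r).coeff m) γ = (P γ r).coeff m := by
    intro r m γ
    rw [hC]
    simp only [Polynomial.finset_sum_coeff, Polynomial.coeff_C_mul, Polynomial.coeff_X_pow]
    rw [Finset.sum_apply]
    simp only [Pi.mul_apply]
    have hterm : ∀ m' ∈ Finset.range (ℓ + 1),
        (P γ r).coeff m' * ((if m = m' then (1 : Γ → ℂ) else 0) γ)
          = if m = m' then (P γ r).coeff m' else 0 := by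
      intro m' _
      by_cases h : m = m' <;> simp [h]
    rw [Finset.sum_congr rfl hterm, Finset.sum_ite_eq]
    by_cases hm : m ∈ Finset.range (ℓ + 1)
    · rw [if_pos hm]
    · rw [if_neg hm]
      refine (Polynomial.coeff_eq_zero_of_natDegree_lt ?_).symm
      have := hPdeg γ r
      simp only [Finset.mem_range] at hm
      omega
  have hCeval : ∀ (r : ZMod N) (c : Γ → ℂ) (γ : Γ),
      ((C r).eval c) γ = ∑ m ∈ Finset.range (ℓ + 1), (P γ r).coeff m * (c γ) ^ m := by
    intro r c γ
    rw [hC]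
    simp only [Polynomial.eval_finset_sum, Polynomial.eval_mul, Polynomial.eval_C,
      Polynomial.eval_pow, Polynomial.eval_X]
    rw [Finset.sum_apply]
    simp [Pi.mul_apply, Pi.pow_apply]
  refine ⟨N, hNpos, C, ?_, ?_, ?_⟩
  · -- evaluation
    intro q hq
    funext γ
    rw [hCeval]
    have hc : (((q : ℕ) : Γ → ℂ)) γ = ((q : ℕ) : ℂ) := by
      simp
    rw [hc, ← Polynomial.eval_eq_sum_range' (Nat.lt_succ_of_le (hPdeg γ _)), hPeval q hq γ]
  · -- class function property
    intro r m γ σ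
    rw [hCcoeff, hCcoeff]
    -- prove P (σγσ⁻¹) r = P γ r via infinitely many common values
    suffices h : P (σ * γ * σ⁻¹) r = P γ r by rw [h]
    have hroot : ∀ k : ℕ, (P (σ * γ * σ⁻¹) r - P γ r).IsRoot (((r.val + (k + 1) * N : ℕ) : ℂ)) := by
      intro k
      set q : ℕ := r.val + (k + 1) * N with hqdef
      have hqpos : 0 < q := by
        have h0 : 0 < (k + 1) * N := Nat.mul_pos (Nat.succ_pos k) hNpos
        omega
      have hr : ((q : ℕ) : ZMod N) = r := by
        rw [hqdef]
        push_cast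
        rw [ZMod.natCast_self, mul_zero, add_zero, ZMod.natCast_rightInverse r]
      have h1 : (P (σ * γ * σ⁻¹) r).eval ((q : ℕ) : ℂ) = χ q (σ * γ * σ⁻¹) := by
        rw [← hr]; exact hPeval q hqpos _
      have h2 : (P γ r).eval ((q : ℕ) : ℂ) = χ q γ := by
        rw [← hr]; exact hPeval q hqpos _
      simp only [Polynomial.IsRoot, Polynomial.eval_sub]
      rw [h1, h2, hconj q hqpos γ σ, sub_self]
    have hinf : {x : ℂ | (P (σ * γ * σ⁻¹) r - P γ r).IsRoot x}.Infinite := by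
      refine Set.infinite_of_injective_forall_mem
        (f := fun k : ℕ => (((r.val + (k + 1) * N : ℕ) : ℂ))) ?_ ?_
      · intro a b hab
        have : ((r.val + (a + 1) * N : ℕ) : ℂ) = ((r.val + (b + 1) * N : ℕ) : ℂ) := hab
        have h2 : (r.val + (a + 1) * N : ℕ) = (r.val + (b + 1) * N : ℕ) := Nat.cast_injective this
        have h3 : (a + 1) * N = (b + 1) * N := by omega
        have := Nat.eq_of_mul_eq_mul_right hNpos h3
        omega
      · intro k
        exact hroot k
    have := Polynomial.eq_zero_of_infinite_isRoot _ hinf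
    exact sub_eq_zero.mp this
  · -- gcd property
    intro r₁ r₂ hgcd
    have : ∀ γ, P γ r₁ = P γ r₂ := by
      intro γ
      rw [hP]
      simp only
      refine Finset.sum_congr rfl fun S _ => ?_
      congr 1
      refine Finset.prod_congr rfl fun k _ => ?_
      rw [hgcd]
    rw [hC]
    simp only
    refine Finset.sum_congr rfl fun m _ => ?_
    have h2 : (fun γ => (P γ r₁).coeff m) = fun γ => (P γ r₂).coeff m :=
      funext fun γ => by rw [this γ]
    rw [h2]
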